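/- Let 𝒳* = {qπ/K : q ∈ ℤ} \ {nπ : n ∈ ℤ}. There exist x ∈ ℝ^{L_r} and z ∈ ℝ^{L_s} such that all the quantities x_i - x_l, z_j - z_m, and (x_i - x_l) ± (z_j - z_m) (for 0 ≤ l < i ≤ L_r-1, 0 ≤ m < j ≤ L_s-1) lie in 𝒳*, if and only if L_r·L_s ≤ K. -/

import Mathlib

open MeasureTheory Real Finset

/-- f(x,y) = Σ_{k=0}^{K-1} cos(y - 2kx). -/
noncomputable def fK (K : ℕ) (x y : ℝ) : ℝ :=
  ∑ k ∈ Finset.range K, Real.cos (y - 2 * (k : ℝ) * x)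

/-- the hypercube [0, 2π)^L. -/
def cube (L : ℕ) : Set (Fin L → ℝ) := Set.univ.pi fun _ => Set.Ico 0 (2 * Real.pi)

/-- 𝒳* = {qπ/K : q ∈ ℤ} \ {nπ : n ∈ ℤ}. -/
def Xstar (K : ℕ) : Set ℝ :=
  {r | (∃ q : ℤ, r = (q : ℝ) * Real.pi / K) ∧ ∀ n : ℤ, r ≠ (n : ℝ) * Real.pi}

/-- the representative of a modulo π lying in [0, π). -/
noncomputable def modpi (a : ℝ) : ℝ := a - Real.pi * ⌊a / Real.pi⌋

/-- the set of ordered index pairs (first strictly less than second). -/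
def pairs (L : ℕ) : Finset (Fin L × Fin L) := Finset.univ.filter fun p => p.1 < p.2

/-- the function J_a from eq. (25)/(eq:J:wp:compact). -/
noncomputable def Ja (K Lr Ls : ℕ) (c c' : Fin Lr × Fin Lr → ℝ) (d d' : Fin Ls × Fin Ls → ℝ)
    (x : Fin Lr → ℝ) (z : Fin Ls → ℝ) (y : Fin Lr → ℝ) (v : Fin Ls → ℝ) : ℝ :=
  (∑ w ∈ pairs Lr, c w * fK K (x w.2 - x w.1) (y w.2 - y w.1)) +
  (∑ p ∈ pairs Ls, d p * fK K (z p.2 - z p.1) (v p.2 - v p.1)) +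
  ∑ w ∈ pairs Lr, ∑ p ∈ pairs Ls, (c' w * d' p / 2) *
    (fK K ((x w.2 - x w.1) + (z p.2 - z p.1)) ((y w.2 - y w.1) + (v p.2 - v p.1)) +
     fK K ((x w.2 - x w.1) - (z p.2 - z p.1)) ((y w.2 - y w.1) - (v p.2 - v p.1)))

/-- D_X ⊂ 𝒳*: all phase-slope differences Δx_w, Δz_p, Δx_w ± Δz_p lie in 𝒳*. -/
def DXsub (K Lr Ls : ℕ) (x : Fin Lr → ℝ) (z : Fin Ls → ℝ) : Prop :=
  (∀ w ∈ pairs Lr, x w.2 - x w.1 ∈ Xstar K) ∧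
  (∀ p ∈ pairs Ls, z p.2 - z p.1 ∈ Xstar K) ∧
  (∀ w ∈ pairs Lr, ∀ p ∈ pairs Ls,
    (x w.2 - x w.1) + (z p.2 - z p.1) ∈ Xstar K ∧
    (x w.2 - x w.1) - (z p.2 - z p.1) ∈ Xstar K)

lemma mem_pairs {L : ℕ} {a b : Fin L} : (a, b) ∈ pairs L ↔ a < b := by
  simp [pairs]

lemma mem_Xstar_of {K : ℕ} (hK : 1 ≤ K) {q : ℤ} (h0 : 0 < q) (h1 : q < K) :
    ((q : ℝ) * Real.pi / K) ∈ Xstar K := by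
  refine ⟨⟨q, rfl⟩, ?_⟩
  intro n hn
  have hπ := Real.pi_ne_zero
  have hKr : (K : ℝ) ≠ 0 := by positivity
  have h : (q : ℝ) = (n : ℝ) * K := by
    field_simp at hn
    exact mul_right_cancel₀ hπ (by rw [hn]; ring : (q:ℝ) * π = ((n:ℝ) * K) * π)
  have hz : q = n * K := by exact_mod_cast h
  have hK' : (0 : ℤ) < K := by exact_mod_cast hK
  have hn1 : 0 < n := by nlinarith
  nlinarith

lemma xstar_ne {K : ℕ} (hK : 1 ≤ K) {a : ℤ} (h : ((a : ℝ) * Real.pi / K) ∈ Xstar K) :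
    (a : ZMod K) ≠ 0 := by
  intro h0
  rw [ZMod.intCast_zmod_eq_zero_iff_dvd] at h0
  obtain ⟨n, rfl⟩ := h0
  have hKr : (K : ℝ) ≠ 0 := by positivity
  exact h.2 n (by push_cast; field_simp)

theorem stmt13 (K Lr Ls : ℕ) (hK : 1 ≤ K) (hLr : 1 ≤ Lr) (hLs : 1 ≤ Ls)
    (h2 : 2 < Lr + Ls) :
    (∃ (x : Fin Lr → ℝ) (z : Fin Ls → ℝ), DXsub K Lr Ls x z) ↔ Lr * Ls ≤ K := by
  have hKr : (K : ℝ) ≠ 0 := by positivity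
  constructor
  · rintro ⟨x, z, hx, hz, hxz⟩
    haveI : NeZero K := ⟨by omega⟩
    set i0 : Fin Lr := ⟨0, by omega⟩ with hi0
    set j0 : Fin Ls := ⟨0, by omega⟩ with hj0
    have hQex : ∀ i : Fin Lr, ∃ q : ℤ, x i - x i0 = (q : ℝ) * Real.pi / K := by
      intro i
      rcases lt_or_eq_of_le (show i0 ≤ i by simp [Fin.le_def, hi0]) with h | h
      · exact (hx (i0, i) (mem_pairs.mpr h)).1
      · exact ⟨0, by rw [← h]; simp⟩
    have hRex : ∀ j : Fin Ls, ∃ q : ℤ, z j - z j0 = (q : ℝ) * Real.pi / K := by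
      intro j
      rcases lt_or_eq_of_le (show j0 ≤ j by simp [Fin.le_def, hj0]) with h | h
      · exact (hz (j0, j) (mem_pairs.mpr h)).1
      · exact ⟨0, by rw [← h]; simp⟩
    choose Q hQ using hQex
    choose R hR using hRex
    have hdx : ∀ i l : Fin Lr, x i - x l = ((Q i - Q l : ℤ) : ℝ) * Real.pi / K := by
      intro i l
      have h1 := hQ i; have h2 := hQ l
      push_cast
      field_simp at h1 h2 ⊢
      ring_nf at h1 h2 ⊢
      linarith
    have hdz : ∀ j m : Fin Ls, z j - z m = ((R j - R m : ℤ) : ℝ) * Real.pi / K := by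
      intro j m
      have h1 := hR j; have h2 := hR m
      push_cast
      field_simp at h1 h2 ⊢
      ring_nf at h1 h2 ⊢
      linarith
    have hxne : ∀ i l : Fin Lr, i ≠ l → ((Q i - Q l : ℤ) : ZMod K) ≠ 0 := by
      intro i l hil
      rcases lt_or_gt_of_ne hil with h | h
      · have := xstar_ne hK (a := Q l - Q i) (by rw [← hdx l i]; exact hx (i, l) (mem_pairs.mpr h))
        intro h0; apply this
        have : ((Q l - Q i : ℤ) : ZMod K) = -((Q i - Q l : ℤ) : ZMod K) := by push_cast; ring
        rw [this, h0, neg_zero]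
      · exact xstar_ne hK (by rw [← hdx i l]; exact hx (l, i) (mem_pairs.mpr h))
    have hzne : ∀ j m : Fin Ls, j ≠ m → ((R j - R m : ℤ) : ZMod K) ≠ 0 := by
      intro j m hjm
      rcases lt_or_gt_of_ne hjm with h | h
      · have := xstar_ne hK (a := R m - R j) (by rw [← hdz m j]; exact hz (j, m) (mem_pairs.mpr h))
        intro h0; apply this
        have : ((R m - R j : ℤ) : ZMod K) = -((R j - R m : ℤ) : ZMod K) := by push_cast; ring
        rw [this, h0, neg_zero]
      · exact xstar_ne hK (by rw [← hdz j m]; exact hz (m, j) (mem_pairs.mpr h))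
    have hsum : ∀ (i l : Fin Lr) (j m : Fin Ls), i ≠ l → j ≠ m →
        (((Q i - Q l) + (R j - R m) : ℤ) : ZMod K) ≠ 0 := by
      intro i l j m hil hjm
      have key : ∀ a : ℤ, ((a : ℝ) * Real.pi / K) ∈ Xstar K →
          (a = (Q i - Q l) + (R j - R m) ∨ a = -((Q i - Q l) + (R j - R m))) →
          (((Q i - Q l) + (R j - R m) : ℤ) : ZMod K) ≠ 0 := by
        intro a ha hcase h0
        apply xstar_ne hK ha
        rcases hcase with rfl | rfl
        · exact h0
        · push_cast at h0 ⊢; rw [h0, neg_zero]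
      rcases lt_or_gt_of_ne hil with hil' | hil' <;> rcases lt_or_gt_of_ne hjm with hjm' | hjm'
      · -- i < l, j < m : use plus on ((i,l),(j,m)), value (Q l - Q i)+(R m - R j) = -target
        refine key ((Q l - Q i) + (R m - R j)) ?_ (Or.inr (by ring))
        have := (hxz (i, l) (mem_pairs.mpr hil') (j, m) (mem_pairs.mpr hjm')).1
        rwa [hdx l i, hdz m j, show ((Q l - Q i : ℤ):ℝ) * Real.pi / K + ((R m - R j : ℤ):ℝ) * Real.pi / K
          = (((Q l - Q i) + (R m - R j) : ℤ) : ℝ) * Real.pi / K by push_cast; ring] at this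
      · -- i < l, j > m : use minus on ((i,l),(m,j)), value (Q l - Q i)-(R j - R m) = -target
        refine key ((Q l - Q i) - (R j - R m)) ?_ (Or.inr (by ring))
        have := (hxz (i, l) (mem_pairs.mpr hil') (m, j) (mem_pairs.mpr hjm')).2
        rwa [hdx l i, hdz j m, show ((Q l - Q i : ℤ):ℝ) * Real.pi / K - ((R j - R m : ℤ):ℝ) * Real.pi / K
          = (((Q l - Q i) - (R j - R m) : ℤ) : ℝ) * Real.pi / K by push_cast; ring] at this
      · -- i > l, j < m : use minus on ((l,i),(j,m)), value (Q i - Q l)-(R m - R j) = target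
        refine key ((Q i - Q l) - (R m - R j)) ?_ (Or.inl (by ring))
        have := (hxz (l, i) (mem_pairs.mpr hil') (j, m) (mem_pairs.mpr hjm')).2
        rwa [hdx i l, hdz m j, show ((Q i - Q l : ℤ):ℝ) * Real.pi / K - ((R m - R j : ℤ):ℝ) * Real.pi / K
          = (((Q i - Q l) - (R m - R j) : ℤ) : ℝ) * Real.pi / K by push_cast; ring] at this
      · -- i > l, j > m : use plus on ((l,i),(m,j)), value target
        refine key ((Q i - Q l) + (R j - R m)) ?_ (Or.inl rfl)
        have := (hxz (l, i) (mem_pairs.mpr hil') (m, j) (mem_pairs.mpr hjm')).1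
        rwa [hdx i l, hdz j m, show ((Q i - Q l : ℤ):ℝ) * Real.pi / K + ((R j - R m : ℤ):ℝ) * Real.pi / K
          = (((Q i - Q l) + (R j - R m) : ℤ) : ℝ) * Real.pi / K by push_cast; ring] at this
    have hinj : Function.Injective (fun p : Fin Lr × Fin Ls => ((Q p.1 + R p.2 : ℤ) : ZMod K)) := by
      rintro ⟨i, j⟩ ⟨l, m⟩ h
      simp only at h
      have h0 : (((Q i - Q l) + (R j - R m) : ℤ) : ZMod K) = 0 := by
        push_cast at h ⊢
        linear_combination h
      by_cases hil : i = l
      · subst hil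
        by_cases hjm : j = m
        · subst hjm; rfl
        · exact absurd (by push_cast at h0 ⊢; linear_combination h0 : ((R j - R m : ℤ) : ZMod K) = 0)
            (hzne j m hjm)
      · by_cases hjm : j = m
        · subst hjm
          exact absurd (by push_cast at h0 ⊢; linear_combination h0 : ((Q i - Q l : ℤ) : ZMod K) = 0)
            (hxne i l hil)
        · exact absurd h0 (hsum i l j m hil hjm)
    have hcard := Fintype.card_le_of_injective _ hinj
    simpa [ZMod.card] using hcard
  · intro hKL
    refine ⟨fun i => ((i : ℕ) : ℝ) * Ls * Real.pi / K, fun j => ((j : ℕ) : ℝ) * Real.pi / K,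
      ?_, ?_, ?_⟩
    · rintro ⟨a, b⟩ hw
      have hab : (a : ℕ) < b := mem_pairs.mp hw
      have hb : (b : ℕ) < Lr := b.isLt
      have heq : ((b : ℕ) : ℝ) * Ls * Real.pi / K - ((a : ℕ) : ℝ) * Ls * Real.pi / K
          = ((((b : ℕ) : ℤ) * Ls - ((a : ℕ) : ℤ) * Ls : ℤ) : ℝ) * Real.pi / K := by
        push_cast; ring
      rw [show ((fun i : Fin Lr => ((i : ℕ) : ℝ) * Ls * Real.pi / K) b -
        (fun i : Fin Lr => ((i : ℕ) : ℝ) * Ls * Real.pi / K) a) =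
        ((((b : ℕ) : ℤ) * Ls - ((a : ℕ) : ℤ) * Ls : ℤ) : ℝ) * Real.pi / K from heq]
      apply mem_Xstar_of hK
      · have : (0 : ℤ) < ((b : ℕ) : ℤ) - ((a : ℕ) : ℤ) := by omega
        have hLs' : (0 : ℤ) < (Ls : ℤ) := by exact_mod_cast hLs
        nlinarith
      · have h1 : ((b : ℕ) : ℤ) - ((a : ℕ) : ℤ) ≤ (Lr : ℤ) - 1 := by omega
        have hLs' : (0 : ℤ) < (Ls : ℤ) := by exact_mod_cast hLs
        have hKL' : (Lr : ℤ) * Ls ≤ K := by exact_mod_cast hKL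
        nlinarith
    · rintro ⟨a, b⟩ hw
      have hab : (a : ℕ) < b := mem_pairs.mp hw
      have hb : (b : ℕ) < Ls := b.isLt
      have heq : ((b : ℕ) : ℝ) * Real.pi / K - ((a : ℕ) : ℝ) * Real.pi / K
          = ((((b : ℕ) : ℤ) - ((a : ℕ) : ℤ) : ℤ) : ℝ) * Real.pi / K := by
        push_cast; ring
      rw [show ((fun j : Fin Ls => ((j : ℕ) : ℝ) * Real.pi / K) b -
        (fun j : Fin Ls => ((j : ℕ) : ℝ) * Real.pi / K) a) =
        ((((b : ℕ) : ℤ) - ((a : ℕ) : ℤ) : ℤ) : ℝ) * Real.pi / K from heq]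
      apply mem_Xstar_of hK
      · omega
      · have hKL' : (Lr : ℤ) * Ls ≤ K := by exact_mod_cast hKL
        have hLr' : (1 : ℤ) ≤ Lr := by exact_mod_cast hLr
        have hLs' : (0 : ℤ) < (Ls : ℤ) := by exact_mod_cast hLs
        nlinarith
    · rintro ⟨a, b⟩ hw ⟨c, d⟩ hp
      have hab : (a : ℕ) < b := mem_pairs.mp hw
      have hcd : (c : ℕ) < d := mem_pairs.mp hp
      have hb : (b : ℕ) < Lr := b.isLt
      have hd : (d : ℕ) < Ls := d.isLt
      have hLs' : (0 : ℤ) < (Ls : ℤ) := by exact_mod_cast hLs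
      have hKL' : (Lr : ℤ) * Ls ≤ K := by exact_mod_cast hKL
      have hd1 : ((d : ℕ) : ℤ) - ((c : ℕ) : ℤ) ≤ (Ls : ℤ) - 1 := by omega
      have hd0 : (1 : ℤ) ≤ ((d : ℕ) : ℤ) - ((c : ℕ) : ℤ) := by omega
      have hb1 : ((b : ℕ) : ℤ) - ((a : ℕ) : ℤ) ≤ (Lr : ℤ) - 1 := by omega
      have hb0 : (1 : ℤ) ≤ ((b : ℕ) : ℤ) - ((a : ℕ) : ℤ) := by omega
      constructor
      · rw [show ((fun i : Fin Lr => ((i : ℕ) : ℝ) * Ls * Real.pi / K) b -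
          (fun i : Fin Lr => ((i : ℕ) : ℝ) * Ls * Real.pi / K) a) +
          ((fun j : Fin Ls => ((j : ℕ) : ℝ) * Real.pi / K) d -
          (fun j : Fin Ls => ((j : ℕ) : ℝ) * Real.pi / K) c) =
          (((((b : ℕ) : ℤ) - ((a : ℕ) : ℤ)) * Ls + (((d : ℕ) : ℤ) - ((c : ℕ) : ℤ)) : ℤ) : ℝ)
            * Real.pi / K by push_cast; ring]
        apply mem_Xstar_of hK
        · nlinarith
        · nlinarith
      · rw [show ((fun i : Fin Lr => ((i : ℕ) : ℝ) * Ls * Real.pi / K) b -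
          (fun i : Fin Lr => ((i : ℕ) : ℝ) * Ls * Real.pi / K) a) -
          ((fun j : Fin Ls => ((j : ℕ) : ℝ) * Real.pi / K) d -
          (fun j : Fin Ls => ((j : ℕ) : ℝ) * Real.pi / K) c) =
          (((((b : ℕ) : ℤ) - ((a : ℕ) : ℤ)) * Ls - (((d : ℕ) : ℤ) - ((c : ℕ) : ℤ)) : ℤ) : ℝ)
            * Real.pi / K by push_cast; ring]
        apply mem_Xstar_of hK
        · nlinarith
        · nlinarith
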